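/- For all integers n ≥ 2 and x ≥ 3, Y_n(x) = Y_{x-1}(n+1), where Y_m(y) := Σ_{i=2}^{y-1} [ C(m+y-2, m-1) − C(m+y−i−1, m−1) ]. In particular, the free groups B_nT and B_{n'}T' of radial trees with parameters (n, x) and (n' = x−1, x' = n+1) have equal rank. -/

import Mathlib

/-- `Y n x = Σ_{i=2}^{x-1} ( C(n+x-2, n-1) − C(n+x−i−1, n−1) )`, the rank of the
`n`-strand braid group of a radial tree whose essential vertex has degree `x`. -/
def Y (n x : ℕ) : ℕ :=
  ∑ i ∈ Finset.Icc 2 (x - 1), (Nat.choose (n + x - 2) (n - 1) - Nat.choose (n + x - i - 1) (n - 1))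

private lemma sum_choose_aux (m : ℕ) : ∀ n : ℕ,
    (∑ j ∈ Finset.range n, Nat.choose (m + 2 + j) (m + 1)) + 1 = Nat.choose (m + 2 + n) (m + 2)
  | 0 => by simp
  | (n+1) => by
    rw [Finset.sum_range_succ]
    have h : Nat.choose (m + 2 + (n + 1)) (m + 2)
        = Nat.choose (m + 2 + n) (m + 1) + Nat.choose (m + 2 + n) (m + 2) := by
      rw [show m + 2 + (n + 1) = (m + 2 + n) + 1 by ring]
      exact Nat.choose_succ_succ _ _
    have ih := sum_choose_aux m n
    omega

private lemma sum_tsub_aux (a : ℕ) (b : ℕ → ℕ) : ∀ n : ℕ, (∀ j < n, b j ≤ a) →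
    (∑ j ∈ Finset.range n, (a - b j)) + ∑ j ∈ Finset.range n, b j = n * a
  | 0, _ => by simp
  | (n+1), h => by
    rw [Finset.sum_range_succ, Finset.sum_range_succ]
    have ih := sum_tsub_aux a b n (fun j hj => h j (by omega))
    have hb := h n (by omega)
    have : (n + 1) * a = n * a + a := by ring
    omega

private lemma Y_key (m k : ℕ) :
    Y (m + 2) (k + 3) + Nat.choose (m + k + 3) (m + 2)
      = (k + 1) * Nat.choose (m + k + 3) (m + 1) + 1 := by
  have hY : Y (m + 2) (k + 3)
      = ∑ j ∈ Finset.range (k + 1),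
          (Nat.choose (m + k + 3) (m + 1) - Nat.choose (m + 2 + j) (m + 1)) := by
    unfold Y
    rw [show (k + 3) - 1 = k + 2 by omega,
      show Finset.Icc 2 (k + 2) = Finset.Ico 2 (k + 3) by exact (Finset.Ico_add_one_right_eq_Icc 2 (k + 2)).symm,
      Finset.sum_Ico_eq_sum_range, show k + 3 - 2 = k + 1 by omega]
    rw [← Finset.sum_range_reflect]
    apply Finset.sum_congr rfl
    intro j hj
    simp only [Finset.mem_range] at hj
    have h1 : m + 2 + (k + 3) - 2 = m + k + 3 := by omega
    have h2 : m + 2 - 1 = m + 1 := by omega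
    have h3 : m + 2 + (k + 3) - (2 + (k + 1 - 1 - j)) - 1 = m + 2 + j := by omega
    rw [h1, h2, h3]
  have hle : ∀ j < k + 1, Nat.choose (m + 2 + j) (m + 1) ≤ Nat.choose (m + k + 3) (m + 1) :=
    fun j hj => Nat.choose_le_choose _ (by omega)
  have h1 : (∑ j ∈ Finset.range (k + 1),
        (Nat.choose (m + k + 3) (m + 1) - Nat.choose (m + 2 + j) (m + 1)))
      + ∑ j ∈ Finset.range (k + 1), Nat.choose (m + 2 + j) (m + 1)
      = (k + 1) * Nat.choose (m + k + 3) (m + 1) :=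
    sum_tsub_aux (Nat.choose (m + k + 3) (m + 1))
      (fun j => Nat.choose (m + 2 + j) (m + 1)) (k + 1) hle
  have h2 := sum_choose_aux m (k + 1)
  rw [show m + 2 + (k + 1) = m + k + 3 by ring] at h2
  omega

theorem Y_symmetry (n x : ℕ) (hn : 2 ≤ n) (hx : 3 ≤ x) : Y n x = Y (x - 1) (n + 1) := by
  obtain ⟨m, rfl⟩ : ∃ m, n = m + 2 := ⟨n - 2, by omega⟩
  obtain ⟨k, rfl⟩ : ∃ k, x = k + 3 := ⟨x - 3, by omega⟩
  have e1 := Y_key m k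
  have e2 := Y_key k m
  rw [show (k + 3) - 1 = k + 2 by omega, show m + 2 + 1 = m + 3 by ring]
  have hsym1 : Nat.choose (k + m + 3) (k + 2) = Nat.choose (m + k + 3) (m + 1) := by
    rw [show k + m + 3 = m + k + 3 by ring, show k + 2 = (m + k + 3) - (m + 1) by omega]
    exact Nat.choose_symm (by omega)
  have hsym2 : Nat.choose (k + m + 3) (k + 1) = Nat.choose (m + k + 3) (m + 2) := by
    rw [show k + m + 3 = m + k + 3 by ring, show k + 1 = (m + k + 3) - (m + 2) by omega]
    exact Nat.choose_symm (by omega)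
  rw [hsym1, hsym2] at e2
  have hmul : Nat.choose (m + k + 3) (m + 2) * (m + 2)
      = Nat.choose (m + k + 3) (m + 1) * (k + 2) := by
    have := Nat.choose_succ_right_eq (m + k + 3) (m + 1)
    rw [show m + k + 3 - (m + 1) = k + 2 by omega] at this
    exact this
  have e3 : (k + 1) * Nat.choose (m + k + 3) (m + 1) + Nat.choose (m + k + 3) (m + 1)
      = (m + 1) * Nat.choose (m + k + 3) (m + 2) + Nat.choose (m + k + 3) (m + 2) := by
    nlinarith [hmul]
  omega
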